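/- Let (a_j)_{j ≥ 0} be a sequence of complex numbers with |a_j| < 1 for all j and ∑_{j ≥ 0} (1 − |a_j|²) = +∞. Define B_n(z) = ∏_{0 ≤ j < n} (z − a_j)/(1 − conj(a_j)·z) and φ_n(z) = B_n(z) · √(1−|a_n|²)/(1 − conj(a_n)·z). If f is a square-integrable function on the unit circle all of whose Fourier coefficients of negative order vanish, and if ∫_{0}^{2π} f(e^{iθ}) · conj(φ_n(e^{iθ})) dθ = 0 for all n ≥ 0, then f = 0 almost everywhere. (The Malmquist–Takenaka system is an orthonormal basis of H² of the torus.) -/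

import Mathlib

open Complex Real MeasureTheory ComplexConjugate Filter
open scoped ENNReal NNReal

namespace MTaux

noncomputable section

/-- `em m θ = exp (-m θ i)`. -/
def em (m : ℤ) (θ : ℝ) : ℂ := Complex.exp (-(m : ℂ) * (θ : ℂ) * I)

lemma em_eq (m : ℤ) (θ : ℝ) : em m θ = Complex.exp ((↑(-(m : ℝ) * θ) : ℂ) * I) := by
  unfold em; push_cast; ring_nf

lemma abs_em (m : ℤ) (θ : ℝ) : ‖em m θ‖ = 1 := by
  rw [em_eq]; exact Complex.norm_exp_ofReal_mul_I _

lemma norm_em (m : ℤ) (θ : ℝ) : ‖em m θ‖ = 1 := abs_em m θ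

lemma em_mul_em (m k : ℤ) (θ : ℝ) : em m θ * em k θ = em (m + k) θ := by
  unfold em; rw [← Complex.exp_add]; push_cast; ring_nf

lemma em_pow (s : ℤ) (k : ℕ) (θ : ℝ) : em s θ ^ k = em (s * k) θ := by
  unfold em; rw [← Complex.exp_nat_mul]; push_cast; ring_nf

lemma continuous_em (m : ℤ) : Continuous (em m) := by
  unfold em; fun_prop

lemma em_neg_one (θ : ℝ) : em (-1) θ = Complex.exp ((θ : ℂ) * I) := by
  unfold em; push_cast; ring_nf

lemma em_one_mul_em_neg_one (θ : ℝ) : em 1 θ * em (-1) θ = 1 := by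
  rw [em_mul_em]; norm_num; unfold em; simp

lemma conj_em (m : ℤ) (θ : ℝ) : conj (em m θ) = em (-m) θ := by
  unfold em
  rw [← Complex.exp_conj]
  congr 1
  simp [Complex.conj_I]


/-- Unnormalized Fourier coefficient over `(0, 2π]`. -/
def FC (u : ℝ → ℂ) (m : ℤ) : ℂ := ∫ θ in Set.Ioc (0:ℝ) (2*π), u θ * em m θ

lemma norm_FC_le (u : ℝ → ℂ) (m : ℤ) :
    ‖FC u m‖ ≤ ∫ θ in Set.Ioc (0:ℝ) (2*π), ‖u θ‖ := by
  refine (norm_integral_le_integral_norm _).trans ?_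
  apply le_of_eq
  refine integral_congr_ae (ae_of_all _ fun θ => ?_)
  simp only [norm_mul, norm_em, mul_one]

lemma FC_em_mul (u : ℝ → ℂ) (s m : ℤ) :
    FC (fun θ => em s θ * u θ) m = FC u (m + s) := by
  unfold FC
  refine integral_congr_ae (ae_of_all _ fun θ => ?_)
  simp only []
  rw [mul_comm (em s θ) (u θ), mul_assoc, em_mul_em, add_comm s m]

lemma FC_const_mul (u : ℝ → ℂ) (c : ℂ) (m : ℤ) :
    FC (fun θ => c * u θ) m = c * FC u m := by
  unfold FC
  rw [← integral_const_mul]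
  refine integral_congr_ae (ae_of_all _ fun θ => ?_)
  ring

lemma FC_sub (u v : ℝ → ℂ) (hu : Integrable u (volume.restrict (Set.Ioc (0:ℝ) (2*π))))
    (hv : Integrable v (volume.restrict (Set.Ioc (0:ℝ) (2*π)))) (m : ℤ) :
    FC (fun θ => u θ - v θ) m = FC u m - FC v m := by
  unfold FC
  rw [← integral_sub]
  · refine integral_congr_ae (ae_of_all _ fun θ => ?_); ring
  · exact hu.bdd_mul (Continuous.aestronglyMeasurable (continuous_em m))
      (ae_of_all _ fun θ => le_of_eq (norm_em m θ)) |>.congr (ae_of_all _ fun θ => by ring)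
  · exact hv.bdd_mul (Continuous.aestronglyMeasurable (continuous_em m))
      (ae_of_all _ fun θ => le_of_eq (norm_em m θ)) |>.congr (ae_of_all _ fun θ => by ring)

lemma mul_em_integrable (u : ℝ → ℂ) (hu : Integrable u (volume.restrict (Set.Ioc (0:ℝ) (2*π))))
    (m : ℤ) : Integrable (fun θ => u θ * em m θ) (volume.restrict (Set.Ioc (0:ℝ) (2*π))) :=
  hu.bdd_mul (Continuous.aestronglyMeasurable (continuous_em m))
    (ae_of_all _ fun θ => le_of_eq (norm_em m θ)) |>.congr (ae_of_all _ fun θ => by ring)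


lemma FC_geom (c : ℂ) (hc : ‖c‖ < 1) (s : ℤ) (u : ℝ → ℂ)
    (hu : Integrable u (volume.restrict (Set.Ioc (0:ℝ) (2*π)))) (m : ℤ) :
    FC (fun θ => (1 - c * em s θ)⁻¹ * u θ) m = ∑' k : ℕ, c ^ k * FC u (m + s * k) := by
  have hnc : ∀ θ : ℝ, ‖c * em s θ‖ < 1 := fun θ => by
    rw [norm_mul, norm_em, mul_one]; exact hc
  have hpt : ∀ θ : ℝ, (1 - c * em s θ)⁻¹ * u θ * em m θ
      = ∑' k : ℕ, c ^ k * (u θ * em (m + s * k) θ) := by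
    intro θ
    rw [← tsum_geometric_of_norm_lt_one (hnc θ), ← tsum_mul_right, ← tsum_mul_right]
    refine tsum_congr fun k => ?_
    have h1 : (c * em s θ) ^ k = c ^ k * em (s * k) θ := by rw [mul_pow, em_pow]
    have h2 : em (s * k) θ * em m θ = em (m + s * k) θ := by
      rw [em_mul_em, add_comm]
    calc (c * em s θ) ^ k * u θ * em m θ
        = c ^ k * (u θ * (em (s * k) θ * em m θ)) := by rw [h1]; ring
      _ = c ^ k * (u θ * em (m + s * k) θ) := by rw [h2]
  have hmeas : ∀ k : ℕ, AEStronglyMeasurable (fun θ => c ^ k * (u θ * em (m + s * k) θ))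
      (volume.restrict (Set.Ioc (0:ℝ) (2*π))) := fun k =>
    ((hu.aestronglyMeasurable.mul (continuous_em _).aestronglyMeasurable).const_mul _)
  have hfin : ∑' k : ℕ, ∫⁻ θ, ‖c ^ k * (u θ * em (m + s * k) θ)‖₊
      ∂(volume.restrict (Set.Ioc (0:ℝ) (2*π))) ≠ ⊤ := by
    have hpt2 : ∀ k : ℕ, ∀ θ : ℝ, (‖c ^ k * (u θ * em (m + s * k) θ)‖₊ : ℝ≥0∞)
        = (‖c‖₊ : ℝ≥0∞) ^ k * ‖u θ‖₊ := by
      intro k θ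
      push_cast
      rw [nnnorm_mul, nnnorm_mul, nnnorm_pow]
      have : ‖em (m + s * k) θ‖₊ = 1 := by
        ext; rw [coe_nnnorm, norm_em]; rfl
      rw [this, mul_one]
      push_cast
      ring
    have hlint : ∀ k : ℕ, ∫⁻ θ, ‖c ^ k * (u θ * em (m + s * k) θ)‖₊
        ∂(volume.restrict (Set.Ioc (0:ℝ) (2*π)))
        = (‖c‖₊ : ℝ≥0∞) ^ k * ∫⁻ θ, ‖u θ‖₊ ∂(volume.restrict (Set.Ioc (0:ℝ) (2*π))) := by
      intro k
      rw [← lintegral_const_mul' _ _ (by exact ENNReal.pow_ne_top ENNReal.coe_ne_top)]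
      exact lintegral_congr fun θ => hpt2 k θ
    simp only [hlint]
    rw [ENNReal.tsum_mul_right]
    apply ENNReal.mul_ne_top
    · rw [ENNReal.tsum_geometric]
      rw [ENNReal.inv_ne_top]
      intro h0
      rw [tsub_eq_zero_iff_le] at h0
      have : (‖c‖₊ : ℝ≥0∞) < 1 := by
        rw [← ENNReal.coe_one, ENNReal.coe_lt_coe]
        exact_mod_cast hc
      exact absurd h0 (not_le.mpr this)
    · exact hu.2.ne
  calc FC (fun θ => (1 - c * em s θ)⁻¹ * u θ) m
      = ∫ θ in Set.Ioc (0:ℝ) (2*π), ∑' k : ℕ, c ^ k * (u θ * em (m + s * k) θ) := by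
        unfold FC
        exact integral_congr_ae (ae_of_all _ fun θ => hpt θ)
    _ = ∑' k : ℕ, ∫ θ in Set.Ioc (0:ℝ) (2*π), c ^ k * (u θ * em (m + s * k) θ) :=
        integral_tsum hmeas hfin
    _ = ∑' k : ℕ, c ^ k * FC u (m + s * k) := by
        refine tsum_congr fun k => ?_
        unfold FC
        rw [integral_const_mul]


lemma summable_pow_mul {d : ℕ → ℂ} {M : ℝ} (hd : ∀ k, ‖d k‖ ≤ M) {w : ℂ} (hw : ‖w‖ < 1) :
    Summable (fun k : ℕ => d k * w ^ k) := by
  refine Summable.of_norm_bounded (g := fun k => M * ‖w‖ ^ k)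
    ((summable_geometric_of_lt_one (norm_nonneg w) hw).mul_left M) (fun k => ?_)
  rw [norm_mul, norm_pow]
  exact mul_le_mul_of_nonneg_right (hd k) (by positivity)

lemma norm_tsum_pow_le {d : ℕ → ℂ} {M : ℝ} (hd : ∀ k, ‖d k‖ ≤ M) {w : ℂ} (hw : ‖w‖ < 1) :
    ‖∑' k : ℕ, d k * w ^ k‖ ≤ M * (1 - ‖w‖)⁻¹ := by
  have hsum : Summable (fun k : ℕ => ‖d k * w ^ k‖) := by
    have := summable_pow_mul hd hw
    exact this.norm
  refine (norm_tsum_le_tsum_norm hsum).trans ?_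
  have hgeo : Summable (fun k : ℕ => M * ‖w‖ ^ k) :=
    (summable_geometric_of_lt_one (norm_nonneg w) hw).mul_left M
  refine (Summable.tsum_le_tsum (fun k => ?_) hsum hgeo).trans ?_
  · rw [norm_mul, norm_pow]
    exact mul_le_mul_of_nonneg_right (hd k) (by positivity)
  · rw [tsum_mul_left, tsum_geometric_of_lt_one (norm_nonneg w) hw]

lemma tsum_peel {d : ℕ → ℂ} {M : ℝ} (hd : ∀ k, ‖d k‖ ≤ M) {w : ℂ} (hw : ‖w‖ < 1) :
    ∑' k : ℕ, d k * w ^ k = d 0 + w * ∑' j : ℕ, d (j + 1) * w ^ j := by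
  rw [Summable.tsum_eq_zero_add (summable_pow_mul hd hw), pow_zero, mul_one]
  congr 1
  rw [← tsum_mul_left]
  exact tsum_congr fun j => by rw [pow_succ]; ring

lemma eq_zero_of_norm_le_lin {x : ℂ} {C : ℝ} (h : ∀ t : ℝ, 0 < t → t ≤ 1/2 → ‖x‖ ≤ C * t) :
    x = 0 := by
  have h0 : ‖x‖ ≤ 0 := by
    have ht : Tendsto (fun t : ℝ => C * t) (nhdsWithin 0 (Set.Ioi 0)) (nhds 0) := by
      have h1 : Tendsto (fun t : ℝ => C * t) (nhds 0) (nhds (C * 0)) :=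
        (continuous_const.mul continuous_id).tendsto 0
      rw [mul_zero] at h1
      exact h1.mono_left nhdsWithin_le_nhds
    refine ge_of_tendsto ht ?_
    filter_upwards [Ioc_mem_nhdsGT_of_mem
      (by constructor <;> norm_num : (0:ℝ) ∈ Set.Ico 0 (1/2))] with t htt
    exact h t htt.1 htt.2
  exact norm_le_zero_iff.mp h0

lemma zero_of_tsum_pow (M : ℝ) :
    ∀ (d : ℕ → ℂ), (∀ k, ‖d k‖ ≤ M) →
      (∀ w : ℂ, ‖w‖ < 1 → ∑' k : ℕ, d k * w ^ k = 0) → ∀ k, d k = 0 := by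
  have hzero : ∀ (d : ℕ → ℂ), (∀ k, ‖d k‖ ≤ M) →
      (∀ w : ℂ, ‖w‖ < 1 → ∑' k : ℕ, d k * w ^ k = 0) → d 0 = 0 := by
    intro d hd h
    have := h 0 (by simp)
    rwa [tsum_eq_single 0 (fun b hb => by rw [zero_pow hb, mul_zero]), pow_zero, mul_one] at this
  intro d hd h k
  induction k generalizing d with
  | zero => exact hzero d hd h
  | succ k ih =>
    have hM : (0:ℝ) ≤ M := (norm_nonneg _).trans (hd 0)
    have hd0 : d 0 = 0 := hzero d hd h
    -- tail sums vanish at nonzero points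
    have key' : ∀ w : ℂ, w ≠ 0 → ‖w‖ < 1 → ∑' j : ℕ, d (j + 1) * w ^ j = 0 := by
      intro w hw0 hw
      have h1 := h w hw
      rw [tsum_peel hd hw, hd0, zero_add] at h1
      exact (mul_eq_zero.mp h1).resolve_left hw0
    -- and hence also at 0
    have hd1 : d 1 = 0 := by
      refine eq_zero_of_norm_le_lin (C := 2 * M) (fun t ht ht2 => ?_)
      have htn : ‖(t:ℂ)‖ < 1 := by
        rw [Complex.norm_real, Real.norm_eq_abs, abs_of_pos ht]; linarith
      have ht0 : (t:ℂ) ≠ 0 := by exact_mod_cast ht.ne'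
      have h2 := key' (t:ℂ) ht0 htn
      rw [tsum_peel (fun j => hd (j+1)) htn] at h2
      have h3 : d 1 = -((t:ℂ) * ∑' j : ℕ, d (j + 1 + 1) * (t:ℂ) ^ j) := by
        rw [eq_neg_iff_add_eq_zero]
        simpa using h2
      rw [h3, norm_neg, norm_mul, Complex.norm_real, Real.norm_eq_abs, abs_of_pos ht]
      have hb : ‖∑' j : ℕ, d (j + 1 + 1) * (t:ℂ) ^ j‖ ≤ M * (1 - t)⁻¹ := by
        have := norm_tsum_pow_le (fun j => hd (j+1+1)) htn
        rwa [Complex.norm_real, Real.norm_eq_abs, abs_of_pos ht] at this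
      have hinv : (1 - t)⁻¹ ≤ 2 := by
        rw [inv_le_comm₀ (by linarith) (by norm_num)]
        linarith
      calc t * ‖∑' j : ℕ, d (j + 1 + 1) * (t:ℂ) ^ j‖ ≤ t * (M * (1 - t)⁻¹) :=
            mul_le_mul_of_nonneg_left hb ht.le
        _ ≤ t * (M * 2) := by
            refine mul_le_mul_of_nonneg_left (mul_le_mul_of_nonneg_left hinv hM) ht.le
        _ = 2 * M * t := by ring
    refine ih (fun j => d (j + 1)) (fun j => hd (j + 1)) (fun w hw => ?_)
    rcases eq_or_ne w 0 with rfl | hw0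
    · rw [tsum_eq_single 0 (fun b hb => by rw [zero_pow hb, mul_zero]), pow_zero, mul_one]
      exact hd1
    · exact key' w hw0 hw


lemma tsum_of_head_vanish {g : ℕ → ℂ} (hs : Summable g) (t : ℕ) (h0 : ∀ k, k < t → g k = 0) :
    ∑' k, g k = ∑' j, g (j + t) := by
  rw [← Summable.sum_add_tsum_nat_add t hs,
    Finset.sum_eq_zero (fun i hi => h0 i (Finset.mem_range.mp hi)), zero_add]

lemma normSq_identity (a w : ℂ) :
    Complex.normSq (1 - conj a * w) - Complex.normSq (w - a)
      = (1 - Complex.normSq a) * (1 - Complex.normSq w) := by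
  simp only [Complex.normSq_apply, Complex.sub_re, Complex.sub_im, Complex.mul_re, Complex.mul_im,
    Complex.conj_re, Complex.conj_im, Complex.one_re, Complex.one_im]
  ring

lemma one_sub_conj_mul_ne_zero {a w : ℂ} (ha : ‖a‖ < 1) (hw : ‖w‖ ≤ 1) :
    1 - conj a * w ≠ 0 := by
  intro h
  have h1 : ‖conj a * w‖ < 1 := by
    rw [norm_mul, RCLike.norm_conj]
    calc ‖a‖ * ‖w‖ ≤ ‖a‖ * 1 := mul_le_mul_of_nonneg_left hw (norm_nonneg a)
      _ < 1 := by rwa [mul_one]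
  rw [sub_eq_zero] at h
  rw [← h] at h1
  simp at h1

lemma blaschke_norm_le {a w : ℂ} (ha : ‖a‖ < 1) (hw : ‖w‖ < 1) :
    ‖(w - a) / (1 - conj a * w)‖ ≤ Real.exp (-((1 - ‖a‖^2) * (1 - ‖w‖^2) / 8)) := by
  have hne : 1 - conj a * w ≠ 0 := one_sub_conj_mul_ne_zero ha hw.le
  set P : ℝ := (1 - ‖a‖^2) * (1 - ‖w‖^2) with hP
  have hPpos : 0 < P := by
    apply mul_pos <;> nlinarith [norm_nonneg a, norm_nonneg w]
  set A : ℝ := ‖(1 : ℂ) - conj a * w‖^2 with hA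
  have hApos : 0 < A := pow_pos (norm_pos_iff.mpr hne) 2
  have hA4 : A ≤ 4 := by
    have h1 : ‖(1 : ℂ) - conj a * w‖ ≤ 2 := by
      refine (norm_sub_le _ _).trans ?_
      rw [norm_one, norm_mul, RCLike.norm_conj]
      nlinarith [norm_nonneg a, norm_nonneg w]
    nlinarith [norm_nonneg ((1 : ℂ) - conj a * w)]
  have hkey : ‖(w - a) / (1 - conj a * w)‖^2 = 1 - P / A := by
    have hdiff : A - ‖w - a‖^2 = P := by
      rw [hA, hP]
      have h1 := normSq_identity a w
      rw [Complex.normSq_eq_norm_sq, Complex.normSq_eq_norm_sq, Complex.normSq_eq_norm_sq,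
        Complex.normSq_eq_norm_sq] at h1
      simpa using h1
    have hBA : ‖w - a‖^2 = A - P := by linarith
    rw [norm_div, div_pow, hBA, sub_div, div_self hApos.ne']
  have hexp : ‖(w - a) / (1 - conj a * w)‖^2 ≤ Real.exp (-(P/4)) := by
    rw [hkey]
    have h1 : P / 4 ≤ P / A := div_le_div_of_nonneg_left hPpos.le hApos hA4
    have h2 : 1 - P / 4 ≤ Real.exp (-(P/4)) := by
      have := Real.add_one_le_exp (-(P/4))
      linarith
    linarith
  have hsq : Real.exp (-(P/8)) ^ 2 = Real.exp (-(P/4)) := by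
    rw [sq, ← Real.exp_add]; ring_nf
  calc ‖(w - a) / (1 - conj a * w)‖
      = Real.sqrt (‖(w - a) / (1 - conj a * w)‖^2) := (Real.sqrt_sq (norm_nonneg _)).symm
    _ ≤ Real.sqrt (Real.exp (-(P/4))) := Real.sqrt_le_sqrt hexp
    _ = Real.exp (-(P/8)) := by rw [← hsq, Real.sqrt_sq (Real.exp_pos _).le]
    _ = Real.exp (-(P/8)) := rfl


lemma ae_zero_of_ae_zero_Ioc (f : ℝ → ℂ) (hper : Function.Periodic f (2*π))
    (h : ∀ᵐ θ ∂(volume.restrict (Set.Ioc (0:ℝ) (2*π))), f θ = 0) : ∀ᵐ θ : ℝ, f θ = 0 := by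
  rw [ae_iff] at h ⊢
  rw [Measure.restrict_apply' measurableSet_Ioc] at h
  set N := toMeasurable volume ({θ : ℝ | ¬ f θ = 0} ∩ Set.Ioc 0 (2*π)) with hN
  have hNnull : volume N = 0 := by rwa [measure_toMeasurable]
  have hsub : {θ : ℝ | ¬ f θ = 0} ⊆ ⋃ n : ℤ, (fun x : ℝ => x + n • (2*π)) ⁻¹' N := by
    intro x hx
    obtain ⟨n, hn, -⟩ := existsUnique_add_zsmul_mem_Ioc Real.two_pi_pos x 0
    refine Set.mem_iUnion.mpr ⟨n, ?_⟩
    have hfx : f (x + n • (2*π)) = f x := (hper.zsmul n) x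
    refine subset_toMeasurable _ _ ⟨?_, by simpa using hn⟩
    simpa only [Set.mem_setOf_eq, hfx] using hx
  refine le_antisymm ?_ zero_le
  refine (measure_mono hsub).trans ((measure_iUnion_le _).trans ?_)
  have hz : ∀ n : ℤ, volume ((fun x : ℝ => x + n • (2*π)) ⁻¹' N) = 0 := by
    intro n
    rw [measure_preimage_add_right]
    exact hNnull
  simp [hz, hNnull]


lemma ae_zero_Ioc_of_coeffs (f : ℝ → ℂ)
    (hf2 : MemLp f 2 (volume.restrict (Set.Ioc (0:ℝ) (2*π))))
    (hall : ∀ n : ℤ, FC f n = 0) :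
    ∀ᵐ θ ∂(volume.restrict (Set.Ioc (0:ℝ) (2*π))), f θ = 0 := by
  haveI hT : Fact (0 < 2*π) := ⟨Real.two_pi_pos⟩
  set μ := volume.restrict (Set.Ioc (0:ℝ) (2*π)) with hμ
  set f' : ℝ → ℂ := hf2.1.mk f with hf'def
  have hff' : f =ᵐ[μ] f' := hf2.1.ae_eq_mk
  have hf'sm : StronglyMeasurable f' := hf2.1.stronglyMeasurable_mk
  have hf2' : MemLp f' 2 μ := hf2.ae_eq hff'
  set g : AddCircle (2*π) → ℂ := AddCircle.liftIoc (2*π) 0 f' with hgdef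
  have hgsm : StronglyMeasurable g := by
    have : g = f' ∘ (fun x : AddCircle (2*π) =>
        ((AddCircle.measurableEquivIoc (2*π) 0 x : Set.Ioc (0:ℝ) (0 + 2*π)) : ℝ)) := rfl
    rw [this]
    exact hf'sm.comp_measurable
      (measurable_subtype_coe.comp (AddCircle.measurableEquivIoc (2*π) 0).measurable)
  have hgmk : ∀ x : ℝ, x ∈ Set.Ioc (0:ℝ) (2*π) → g (x : AddCircle (2*π)) = f' x := by
    intro x hx
    exact AddCircle.liftIoc_coe_apply (by simpa using hx)
  have hmp := AddCircle.measurePreserving_mk (2*π) 0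
  have hzero_add : Set.Ioc (0:ℝ) (0 + 2*π) = Set.Ioc (0:ℝ) (2*π) := by rw [zero_add]
  have hvol : eLpNorm g 2 (volume : Measure (AddCircle (2*π))) = eLpNorm f' 2 μ := by
    rw [← eLpNorm_comp_measurePreserving hgsm.aestronglyMeasurable hmp]
    rw [hzero_add]
    refine eLpNorm_congr_ae ?_
    filter_upwards [ae_restrict_mem measurableSet_Ioc] with x hx
    exact hgmk x hx
  have hgL2AC : MemLp g 2 (volume : Measure (AddCircle (2*π))) :=
    ⟨hgsm.aestronglyMeasurable, by rw [hvol]; exact hf2'.2⟩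
  have hle : (AddCircle.haarAddCircle : Measure (AddCircle (2*π))) ≤ volume := by
    rw [AddCircle.volume_eq_smul_haarAddCircle]
    refine Measure.le_iff.2 fun s hs => ?_
    rw [Measure.smul_apply, smul_eq_mul]
    refine le_mul_of_one_le_left zero_le ?_
    rw [← ENNReal.ofReal_one]
    exact ENNReal.ofReal_le_ofReal (by linarith [Real.pi_gt_three])
  have hgL2 : MemLp g 2 (AddCircle.haarAddCircle : Measure (AddCircle (2*π))) := hgL2AC.mono_measure hle
  -- All Fourier coefficients of `g` vanish.
  have hcoe : ∀ n : ℤ, fourierCoeff g n = 0 := by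
    intro n
    rw [fourierCoeff_eq_intervalIntegral g n 0]
    have : ∫ x in (0:ℝ)..(0 + 2*π), (fourier (-n) (x : AddCircle (2*π)) : ℂ) • g x = 0 := by
      rw [zero_add, intervalIntegral.integral_of_le Real.two_pi_pos.le]
      have := hall n
      unfold FC at this
      rw [← this]
      refine integral_congr_ae ?_
      filter_upwards [ae_restrict_mem measurableSet_Ioc, hff'] with x hx hx'
      rw [hgmk x hx, ← hx']
      rw [smul_eq_mul, mul_comm]
      congr 1
      rw [fourier_coe_apply]
      unfold em
      congr 1
      push_cast
      have hpi : (π : ℂ) ≠ 0 := by exact_mod_cast Real.pi_ne_zero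
      field_simp
    rw [this, smul_zero]
  -- conclude `g = 0` a.e. for the Haar measure
  set G : Lp ℂ 2 (AddCircle.haarAddCircle : Measure (AddCircle (2*π))) := hgL2.toLp g with hGdef
  have hGcoeff : ∀ n : ℤ, fourierCoeff (G : AddCircle (2*π) → ℂ) n = fourierCoeff g n := by
    intro n
    unfold fourierCoeff
    refine integral_congr_ae ?_
    filter_upwards [hgL2.coeFn_toLp] with t ht
    rw [ht]
  have hGzero : G = 0 := by
    rw [← (fourierBasis (T := 2*π)).repr.map_eq_zero_iff]
    refine lp.eq_zero_iff_coeFn_eq_zero.mpr (funext fun n => ?_)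
    rw [fourierBasis_repr, hGcoeff, hcoe]
    rfl
  have hg0 : g =ᵐ[(AddCircle.haarAddCircle : Measure (AddCircle (2*π)))] 0 := by
    have h1 : (G : AddCircle (2*π) → ℂ) =ᵐ[(AddCircle.haarAddCircle : Measure (AddCircle (2*π)))] 0 := by
      rw [hGzero]
      exact Lp.coeFn_zero _ _ _
    exact (hgL2.coeFn_toLp).symm.trans h1
  have hg0v : g =ᵐ[(volume : Measure (AddCircle (2*π)))] 0 := by
    rw [AddCircle.volume_eq_smul_haarAddCircle]
    exact Measure.ae_smul_measure hg0 _
  -- pull back to the interval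
  have hg0v' : ∀ᵐ y ∂(volume : Measure (AddCircle (2*π))), g y = 0 := by
    filter_upwards [hg0v] with y hy
    simpa using hy
  have hnull := ae_iff.mp hg0v'
  have hpre : μ ((QuotientAddGroup.mk : ℝ → AddCircle (2*π)) ⁻¹' {y | ¬ g y = 0}) = 0 := by
    have h2 := hmp.quasiMeasurePreserving.preimage_null hnull
    rwa [hzero_add] at h2
  have hae : ∀ᵐ x ∂μ, g (((x : ℝ) : AddCircle (2*π))) = 0 := by
    rw [ae_iff]
    exact hpre
  filter_upwards [hae, hff', ae_restrict_mem measurableSet_Ioc] with x hx hx' hmem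
  rw [hx', ← hgmk x hmem]
  exact hx


/-- boundary value of `exp(iθ)` -/
def ec (θ : ℝ) : ℂ := Complex.exp ((θ:ℂ) * I)

lemma ec_eq_em (θ : ℝ) : ec θ = em (-1) θ := (em_neg_one θ).symm

lemma abs_ec (θ : ℝ) : ‖ec θ‖ = 1 := Complex.norm_exp_ofReal_mul_I θ

lemma norm_ec (θ : ℝ) : ‖ec θ‖ = 1 := abs_ec θ

lemma conj_ec (θ : ℝ) : conj (ec θ) = em 1 θ := by
  rw [ec_eq_em, conj_em]
  norm_num

lemma em1_mul_ec (θ : ℝ) : em 1 θ * ec θ = 1 := by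
  rw [ec_eq_em, em_mul_em]
  norm_num
  unfold em
  simp

lemma ec_sub_ne_zero {a : ℂ} (ha : ‖a‖ < 1) (θ : ℝ) : ec θ - a ≠ 0 := by
  intro h
  rw [sub_eq_zero] at h
  rw [← h, norm_ec] at ha
  exact absurd ha (lt_irrefl _)

lemma one_sub_conj_mul_ec_ne_zero {a : ℂ} (ha : ‖a‖ < 1) (θ : ℝ) :
    1 - conj a * ec θ ≠ 0 :=
  one_sub_conj_mul_ne_zero ha (le_of_eq (norm_ec θ))

lemma em1_ne_zero (θ : ℝ) : em 1 θ ≠ 0 := Complex.exp_ne_zero _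

lemma one_sub_mul_em1_eq (a : ℂ) (θ : ℝ) :
    (1 : ℂ) - a * em 1 θ = em 1 θ * (ec θ - a) := by
  rw [mul_sub, em1_mul_ec]
  ring

lemma one_sub_mul_em1_ne_zero {a : ℂ} (ha : ‖a‖ < 1) (θ : ℝ) :
    (1 : ℂ) - a * em 1 θ ≠ 0 := by
  rw [one_sub_mul_em1_eq]
  exact mul_ne_zero (em1_ne_zero θ) (ec_sub_ne_zero ha θ)

/-- conjugate-reciprocal Blaschke boundary factor -/
def qf (a : ℂ) (θ : ℝ) : ℂ := (1 - conj a * ec θ) / (ec θ - a)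

lemma norm_qf {a : ℂ} (ha : ‖a‖ < 1) (θ : ℝ) : ‖qf a θ‖ = 1 := by
  have key : em 1 θ * (1 - conj a * ec θ) = conj (ec θ - a) := by
    rw [map_sub, conj_ec, mul_sub, mul_comm (conj a) (ec θ), ← mul_assoc, em1_mul_ec]
    ring
  have hn : ‖1 - conj a * ec θ‖ = ‖ec θ - a‖ := by
    have := congrArg norm key
    rwa [norm_mul, norm_em, one_mul, RCLike.norm_conj] at this
  rw [qf, norm_div, hn, div_self]
  rw [norm_ne_zero_iff]
  exact ec_sub_ne_zero ha θ

lemma qf_eq {a : ℂ} (ha : ‖a‖ < 1) (θ : ℝ) :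
    qf a θ = (em 1 θ - conj a) * (1 - a * em 1 θ)⁻¹ := by
  rw [← div_eq_mul_inv, qf]
  rw [div_eq_div_iff (ec_sub_ne_zero ha θ) (one_sub_mul_em1_ne_zero ha θ)]
  have hec1 : em 1 θ * ec θ = 1 := em1_mul_ec θ
  linear_combination (conj a * a - 1) * hec1

lemma conj_bfactor {a : ℂ} (ha : ‖a‖ < 1) (θ : ℝ) :
    conj ((ec θ - a) / (1 - conj a * ec θ)) = qf a θ := by
  rw [map_div₀, map_sub, map_sub, map_mul, conj_ec, Complex.conj_conj, map_one, qf_eq ha,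
    div_eq_mul_inv]

lemma bf_mul_qf {a : ℂ} (ha : ‖a‖ < 1) (θ : ℝ) :
    ((ec θ - a) / (1 - conj a * ec θ)) * qf a θ = 1 := by
  rw [qf, div_mul_div_comm, mul_comm (1 - conj a * ec θ) (ec θ - a), div_self]
  exact mul_ne_zero (ec_sub_ne_zero ha θ) (one_sub_conj_mul_ec_ne_zero ha θ)

lemma continuous_qf {a : ℂ} (ha : ‖a‖ < 1) : Continuous (qf a) := by
  unfold qf ec
  refine Continuous.div ?_ ?_ ?_
  · fun_prop
  · fun_prop
  · intro θ
    exact ec_sub_ne_zero ha θ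

/-- the sequence of functions obtained by successively dividing out Blaschke factors -/
def hseq (a : ℕ → ℂ) (f : ℝ → ℂ) (n : ℕ) (θ : ℝ) : ℂ :=
  (∏ j ∈ Finset.range n, qf (a j) θ) * f θ

lemma hseq_zero (a : ℕ → ℂ) (f : ℝ → ℂ) (θ : ℝ) : hseq a f 0 θ = f θ := by
  unfold hseq; simp

lemma hseq_succ (a : ℕ → ℂ) (f : ℝ → ℂ) (n : ℕ) (θ : ℝ) :
    hseq a f (n+1) θ = qf (a n) θ * hseq a f n θ := by
  unfold hseq; rw [Finset.prod_range_succ]; ring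

lemma norm_hseq {a : ℕ → ℂ} (ha : ∀ j, ‖a j‖ < 1) (f : ℝ → ℂ) (n : ℕ) (θ : ℝ) :
    ‖hseq a f n θ‖ = ‖f θ‖ := by
  unfold hseq
  rw [norm_mul, norm_prod]
  rw [Finset.prod_congr rfl (fun j _ => norm_qf (ha j) θ), Finset.prod_const_one, one_mul]

lemma hseq_integrable {a : ℕ → ℂ} (ha : ∀ j, ‖a j‖ < 1) {f : ℝ → ℂ}
    (hf : Integrable f (volume.restrict (Set.Ioc (0:ℝ) (2*π)))) (n : ℕ) :
    Integrable (hseq a f n) (volume.restrict (Set.Ioc (0:ℝ) (2*π))) := by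
  refine hf.bdd_mul (c := 1) ?_ (ae_of_all _ fun θ => ?_)
  · exact (continuous_finset_prod _ (fun j _ => continuous_qf (ha j))).aestronglyMeasurable
  · rw [norm_prod, Finset.prod_congr rfl (fun j _ => norm_qf (ha j) θ), Finset.prod_const_one]

lemma hseq_succ_inv {a : ℕ → ℂ} (ha : ∀ j, ‖a j‖ < 1) (f : ℝ → ℂ) (n : ℕ) (θ : ℝ) :
    hseq a f n θ = ((ec θ - a n) / (1 - conj (a n) * ec θ)) * hseq a f (n+1) θ := by
  rw [hseq_succ, ← mul_assoc, bf_mul_qf (ha n), one_mul]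


lemma one_sub_ne_zero_of_norm_lt_one {x : ℂ} (h : ‖x‖ < 1) : 1 - x ≠ 0 := by
  intro h0
  rw [sub_eq_zero] at h0
  rw [← h0] at h
  simp at h

lemma norm_geom_inv_le {a : ℂ} (ha : ‖a‖ < 1) (s : ℤ) (θ : ℝ) :
    ‖(1 - a * em s θ)⁻¹‖ ≤ (1 - ‖a‖)⁻¹ := by
  have hna : ‖a * em s θ‖ = ‖a‖ := by rw [norm_mul, norm_em, mul_one]
  have h1 : 1 - ‖a‖ ≤ ‖1 - a * em s θ‖ := by
    have := norm_sub_norm_le (1 : ℂ) (a * em s θ)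
    rwa [norm_one, hna] at this
  rw [norm_inv]
  exact inv_anti₀ (by linarith) h1

lemma one_sub_mul_em_ne_zero {a : ℂ} (ha : ‖a‖ < 1) (s : ℤ) (θ : ℝ) :
    (1 : ℂ) - a * em s θ ≠ 0 :=
  one_sub_ne_zero_of_norm_lt_one (by rw [norm_mul, norm_em, mul_one]; exact ha)

lemma geom_mul_integrable {a : ℂ} (ha : ‖a‖ < 1) (s : ℤ) {u : ℝ → ℂ}
    (hu : Integrable u (volume.restrict (Set.Ioc (0:ℝ) (2*π)))) :
    Integrable (fun θ => (1 - a * em s θ)⁻¹ * u θ) (volume.restrict (Set.Ioc (0:ℝ) (2*π))) := by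
  refine hu.bdd_mul ?_ (ae_of_all _ fun θ => norm_geom_inv_le ha s θ)
  refine ((continuous_const.sub (continuous_const.mul (continuous_em s))).inv₀
    (fun θ => one_sub_mul_em_ne_zero ha s θ)).aestronglyMeasurable

lemma FC_congr {u v : ℝ → ℂ} (h : ∀ θ, u θ = v θ) (m : ℤ) : FC u m = FC v m := by
  unfold FC
  exact integral_congr_ae (ae_of_all _ fun θ => by simp only []; rw [h θ])

lemma summable_const_pow_mul {c : ℂ} (hc : ‖c‖ < 1) {D : ℕ → ℂ} {M : ℝ}
    (hD : ∀ j, ‖D j‖ ≤ M) : Summable (fun k : ℕ => c ^ k * D k) := by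
  refine Summable.of_norm_bounded (g := fun k => M * ‖c‖ ^ k)
    ((summable_geometric_of_lt_one (norm_nonneg c) hc).mul_left M) (fun k => ?_)
  rw [norm_mul, norm_pow, mul_comm]
  exact mul_le_mul_of_nonneg_right (hD k) (by positivity)

lemma norm_tsum_const_pow_mul_le {c : ℂ} (hc : ‖c‖ < 1) {D : ℕ → ℂ} {M : ℝ}
    (hD : ∀ j, ‖D j‖ ≤ M) : ‖∑' k : ℕ, c ^ k * D k‖ ≤ M * (1 - ‖c‖)⁻¹ := by
  have h1 : ∑' k : ℕ, c ^ k * D k = ∑' k : ℕ, D k * c ^ k := tsum_congr fun k => mul_comm _ _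
  rw [h1]
  exact norm_tsum_pow_le hD hc

/-- vanishing of shifted geometric sums against coefficients -/
lemma tsum_tail_zero {c : ℂ} (hc : ‖c‖ < 1) (D : ℤ → ℂ) {M : ℝ} (hD : ∀ j, ‖D j‖ ≤ M)
    (hDneg : ∀ j : ℤ, j < 0 → D j = 0) (hz : ∑' k : ℕ, c ^ k * D (k : ℤ) = 0)
    {m : ℤ} (hm : m ≤ 0) : ∑' k : ℕ, c ^ k * D (m + k) = 0 := by
  set t := (-m).toNat with ht
  have htt : (t : ℤ) = -m := Int.toNat_of_nonneg (by omega)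
  have hsum : Summable (fun k : ℕ => c ^ k * D (m + k)) :=
    summable_const_pow_mul hc (fun k => hD _)
  rw [tsum_of_head_vanish hsum t (fun k hk => ?_)]
  · have hcongr : ∀ j : ℕ, c ^ (j + t) * D (m + (j + t : ℕ)) = c ^ t * (c ^ j * D j) := by
      intro j
      have hidx : m + ((j + t : ℕ) : ℤ) = j := by push_cast; omega
      rw [hidx, pow_add]
      ring
    rw [tsum_congr hcongr, tsum_mul_left, hz, mul_zero]
  · have hlt : m + (k : ℤ) < 0 := by omega
    rw [hDneg _ hlt, mul_zero]


lemma FC_sub' {w u v : ℝ → ℂ} (h : ∀ θ, w θ = u θ - v θ)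
    (hu : Integrable u (volume.restrict (Set.Ioc (0:ℝ) (2*π))))
    (hv : Integrable v (volume.restrict (Set.Ioc (0:ℝ) (2*π)))) (m : ℤ) :
    FC w m = FC u m - FC v m := by
  rw [FC_congr h m]
  exact FC_sub u v hu hv m

lemma norm_FC_hseq_le {a : ℕ → ℂ} {f : ℝ → ℂ} (ha : ∀ j, ‖a j‖ < 1) (n : ℕ) (m : ℤ) :
    ‖FC (hseq a f n) m‖ ≤ ∫ θ in Set.Ioc (0:ℝ) (2*π), ‖f θ‖ := by
  refine (norm_FC_le _ m).trans (le_of_eq ?_)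
  exact integral_congr_ae (ae_of_all _ fun θ => norm_hseq ha f n θ)

lemma FC_hseq_succ {a : ℕ → ℂ} {f : ℝ → ℂ} (ha : ∀ j, ‖a j‖ < 1)
    (hf : Integrable f (volume.restrict (Set.Ioc (0:ℝ) (2*π)))) (n : ℕ) (m : ℤ) :
    FC (hseq a f (n+1)) m
      = (∑' k : ℕ, (a n) ^ k * FC (hseq a f n) (m + 1 + k))
        - conj (a n) * ∑' k : ℕ, (a n) ^ k * FC (hseq a f n) (m + k) := by
  have hun : Integrable (hseq a f n) (volume.restrict (Set.Ioc (0:ℝ) (2*π))) :=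
    hseq_integrable ha hf n
  set Su : ℝ → ℂ := fun θ => (1 - a n * em 1 θ)⁻¹ * hseq a f n θ with hSu
  have hSuInt : Integrable Su (volume.restrict (Set.Ioc (0:ℝ) (2*π))) :=
    geom_mul_integrable (ha n) 1 hun
  have h1 : ∀ θ, hseq a f (n+1) θ = em 1 θ * Su θ - conj (a n) * Su θ := by
    intro θ
    rw [hseq_succ, qf_eq (ha n), hSu]
    ring
  have hi1 : Integrable (fun θ => em 1 θ * Su θ) (volume.restrict (Set.Ioc (0:ℝ) (2*π))) :=
    (hSuInt.bdd_mul (continuous_em 1).aestronglyMeasurable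
      (ae_of_all _ fun θ => le_of_eq (norm_em 1 θ))).congr (ae_of_all _ fun θ => by ring)
  have hi2 : Integrable (fun θ => conj (a n) * Su θ) (volume.restrict (Set.Ioc (0:ℝ) (2*π))) :=
    hSuInt.const_mul _
  have hgeom : ∀ m' : ℤ, FC Su m' = ∑' k : ℕ, (a n) ^ k * FC (hseq a f n) (m' + k) := by
    intro m'
    have := FC_geom (a n) (ha n) 1 (hseq a f n) hun m'
    rw [this]
    exact tsum_congr fun k => by rw [one_mul]
  calc FC (hseq a f (n+1)) m
      = FC (fun θ => em 1 θ * Su θ) m - FC (fun θ => conj (a n) * Su θ) m :=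
        FC_sub' h1 hi1 hi2 m
    _ = FC Su (m + 1) - conj (a n) * FC Su m := by
        rw [FC_em_mul Su 1 m, FC_const_mul Su (conj (a n)) m]
    _ = (∑' k : ℕ, (a n) ^ k * FC (hseq a f n) (m + 1 + k))
        - conj (a n) * ∑' k : ℕ, (a n) ^ k * FC (hseq a f n) (m + k) := by
        rw [hgeom (m+1), hgeom m]

lemma neg_coeff_vanish {a : ℕ → ℂ} {f : ℝ → ℂ} (ha : ∀ j, ‖a j‖ < 1)
    (hf : Integrable f (volume.restrict (Set.Ioc (0:ℝ) (2*π))))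
    (hneg0 : ∀ m : ℤ, m < 0 → FC f m = 0)
    (hzero : ∀ n, ∑' k : ℕ, (a n) ^ k * FC (hseq a f n) (k : ℤ) = 0) :
    ∀ n, ∀ m : ℤ, m < 0 → FC (hseq a f n) m = 0 := by
  intro n
  induction n with
  | zero =>
    intro m hm
    rw [FC_congr (hseq_zero a f) m]
    exact hneg0 m hm
  | succ n ih =>
    intro m hm
    rw [FC_hseq_succ ha hf n m]
    have hb := norm_FC_hseq_le (f := f) ha n
    rw [tsum_tail_zero (ha n) (fun j => FC (hseq a f n) j) (fun j => hb j) ih (hzero n)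
      (by omega : m + 1 ≤ 0)]
    rw [tsum_tail_zero (ha n) (fun j => FC (hseq a f n) j) (fun j => hb j) ih (hzero n)
      (by omega : m ≤ 0)]
    ring


lemma phi_step {a : ℕ → ℂ} {f : ℝ → ℂ} (ha : ∀ j, ‖a j‖ < 1)
    (hf : Integrable f (volume.restrict (Set.Ioc (0:ℝ) (2*π))))
    (hnegs : ∀ n, ∀ m : ℤ, m < 0 → FC (hseq a f n) m = 0)
    (n : ℕ) {w : ℂ} (hw : ‖w‖ < 1) :
    ∑' k : ℕ, FC (hseq a f n) (k : ℤ) * w ^ k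
      = ((w - a n) / (1 - conj (a n) * w)) *
        ∑' k : ℕ, FC (hseq a f (n+1)) (k : ℤ) * w ^ k := by
  set M : ℝ := ∫ θ in Set.Ioc (0:ℝ) (2*π), ‖f θ‖ with hM
  set c : ℂ := conj (a n) with hc
  have hcn : ‖c‖ < 1 := by rw [hc, RCLike.norm_conj]; exact ha n
  set u : ℝ → ℂ := hseq a f (n+1) with hu
  have huInt : Integrable u (volume.restrict (Set.Ioc (0:ℝ) (2*π))) :=
    hseq_integrable ha hf (n+1)
  have hub : ∀ m : ℤ, ‖FC u m‖ ≤ M := fun m => norm_FC_hseq_le ha (n+1) m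
  have huneg : ∀ m : ℤ, m < 0 → FC u m = 0 := hnegs (n+1)
  set Tu : ℝ → ℂ := fun θ => (1 - c * em (-1) θ)⁻¹ * u θ with hTu
  have hTuInt : Integrable Tu (volume.restrict (Set.Ioc (0:ℝ) (2*π))) :=
    geom_mul_integrable hcn (-1) huInt
  set E : ℤ → ℂ := fun m => FC Tu m with hE
  have hEeq : ∀ m : ℤ, E m = ∑' k : ℕ, c ^ k * FC u (m - k) := by
    intro m
    have h1 := FC_geom c hcn (-1) u huInt m
    have h2 : E m = FC Tu m := rfl
    rw [h2, h1]
    exact tsum_congr fun k => by rw [show m + (-1) * (k:ℤ) = m - k by ring]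
  have hEb : ∀ m : ℤ, ‖E m‖ ≤ M * (1 - ‖c‖)⁻¹ := by
    intro m
    rw [hEeq m]
    exact norm_tsum_const_pow_mul_le hcn (fun k => hub _)
  have hEneg : E (-1) = 0 := by
    rw [hEeq]
    have hz : ∀ k : ℕ, c ^ k * FC u (-1 - k) = 0 := fun k => by
      rw [huneg _ (by omega), mul_zero]
    rw [tsum_congr hz, tsum_zero]
  have hdm : ∀ m : ℤ, FC (hseq a f n) m = E (m - 1) - a n * E m := by
    intro m
    have h1 : ∀ θ, hseq a f n θ = em (-1) θ * Tu θ - a n * Tu θ := by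
      intro θ
      rw [hseq_succ_inv ha f n θ, hTu, div_eq_mul_inv, ec_eq_em]
      ring
    have hi1 : Integrable (fun θ => em (-1) θ * Tu θ)
        (volume.restrict (Set.Ioc (0:ℝ) (2*π))) :=
      (hTuInt.bdd_mul (continuous_em (-1)).aestronglyMeasurable
        (ae_of_all _ fun θ => le_of_eq (norm_em (-1) θ))).congr (ae_of_all _ fun θ => by ring)
    have hi2 : Integrable (fun θ => a n * Tu θ) (volume.restrict (Set.Ioc (0:ℝ) (2*π))) :=
      hTuInt.const_mul _
    calc FC (hseq a f n) m
        = FC (fun θ => em (-1) θ * Tu θ) m - FC (fun θ => a n * Tu θ) m :=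
          FC_sub' h1 hi1 hi2 m
      _ = FC Tu (m + -1) - a n * FC Tu m := by
          rw [FC_em_mul Tu (-1) m, FC_const_mul Tu (a n) m]
      _ = E (m - 1) - a n * E m := by
          have h9 : m + -1 = m - 1 := by ring
          rw [h9]
  have hMc : ∀ m : ℤ, ‖E m‖ ≤ M * (1 - ‖c‖)⁻¹ := hEb
  have hsum2 : Summable (fun m : ℕ => E (m : ℤ) * w ^ m) :=
    summable_pow_mul (fun m => hMc _) hw
  have hsum1 : Summable (fun m : ℕ => E ((m : ℤ) - 1) * w ^ m) :=
    summable_pow_mul (d := fun m : ℕ => E ((m : ℤ) - 1)) (fun m => hMc _) hw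
  have step1 : ∑' k : ℕ, FC (hseq a f n) (k : ℤ) * w ^ k
      = (∑' m : ℕ, E ((m : ℤ) - 1) * w ^ m) - a n * ∑' m : ℕ, E (m : ℤ) * w ^ m := by
    have hcg : ∀ m : ℕ, FC (hseq a f n) (m : ℤ) * w ^ m
        = E ((m : ℤ) - 1) * w ^ m - a n * (E (m : ℤ) * w ^ m) := by
      intro m
      rw [hdm]
      ring
    rw [tsum_congr hcg, Summable.tsum_sub hsum1 (hsum2.mul_left (a n)), tsum_mul_left]
  have peel : ∑' m : ℕ, E ((m : ℤ) - 1) * w ^ m = w * ∑' m : ℕ, E (m : ℤ) * w ^ m := by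
    have hp := tsum_peel (d := fun m : ℕ => E ((m : ℤ) - 1)) (fun m => hMc _) hw
    rw [hp]
    beta_reduce
    rw [show ((0:ℕ) : ℤ) - 1 = -1 by norm_num, hEneg, zero_add]
    congr 1
    refine tsum_congr fun j => ?_
    rw [show (((j+1 : ℕ)) : ℤ) - 1 = (j : ℤ) by push_cast; ring]
  have hcw : ‖c * w‖ < 1 := by
    rw [norm_mul]
    nlinarith [norm_nonneg c, norm_nonneg w]
  have hf1 : Summable (fun k : ℕ => ‖(c * w) ^ k‖) := by
    simpa [norm_pow] using summable_geometric_of_lt_one (norm_nonneg (c*w)) hcw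
  have hg1 : Summable (fun j : ℕ => ‖FC u (j : ℤ) * w ^ j‖) := by
    refine Summable.of_nonneg_of_le (fun j => norm_nonneg _) (fun j => ?_)
      ((summable_geometric_of_lt_one (norm_nonneg w) hw).mul_left M)
    rw [norm_mul, norm_pow]
    exact mul_le_mul_of_nonneg_right (hub _) (by positivity)
  have hcauchy := tsum_mul_tsum_eq_tsum_sum_range_of_summable_norm hf1 hg1
  have hEm : ∀ m : ℕ, ∑ k ∈ Finset.range (m+1), (c*w) ^ k * (FC u ((m - k : ℕ) : ℤ) * w ^ (m - k))
      = E (m : ℤ) * w ^ m := by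
    intro m
    rw [hEeq]
    have hts : ∑' k : ℕ, c ^ k * FC u ((m : ℤ) - k)
        = ∑ k ∈ Finset.range (m+1), c ^ k * FC u ((m : ℤ) - k) := by
      refine tsum_eq_sum ?_
      intro k hk
      have hmk : m < k := by
        by_contra hcon
        exact hk (Finset.mem_range.mpr (by omega))
      rw [huneg _ (by omega), mul_zero]
    rw [hts, Finset.sum_mul]
    refine (Finset.sum_congr rfl fun k hk => ?_).symm
    have hkm : k ≤ m := by
      have := Finset.mem_range.mp hk
      omega
    have hc1 : ((m : ℤ) - k) = ((m - k : ℕ) : ℤ) := by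
      rw [Int.ofNat_sub hkm]
    have hwk : w ^ k * w ^ (m - k) = w ^ m := by
      rw [← pow_add]
      congr 1
      omega
    rw [hc1, mul_pow]
    calc c ^ k * FC u ((m - k : ℕ) : ℤ) * w ^ m
        = c ^ k * FC u ((m - k : ℕ) : ℤ) * (w ^ k * w ^ (m - k)) := by rw [hwk]
      _ = c ^ k * w ^ k * (FC u ((m - k : ℕ) : ℤ) * w ^ (m - k)) := by ring
  have hX : ∑' m : ℕ, E (m : ℤ) * w ^ m
      = (1 - c * w)⁻¹ * ∑' j : ℕ, FC u (j : ℤ) * w ^ j := by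
    rw [← tsum_congr hEm, ← hcauchy, tsum_geometric_of_norm_lt_one hcw]
  rw [step1, peel, hX, div_eq_mul_inv]
  ring

lemma phi_prod {a : ℕ → ℂ} {f : ℝ → ℂ} (ha : ∀ j, ‖a j‖ < 1)
    (hf : Integrable f (volume.restrict (Set.Ioc (0:ℝ) (2*π))))
    (hnegs : ∀ n, ∀ m : ℤ, m < 0 → FC (hseq a f n) m = 0)
    (n : ℕ) {w : ℂ} (hw : ‖w‖ < 1) :
    ∑' k : ℕ, FC f (k : ℤ) * w ^ k
      = (∏ j ∈ Finset.range n, ((w - a j) / (1 - conj (a j) * w))) *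
        ∑' k : ℕ, FC (hseq a f n) (k : ℤ) * w ^ k := by
  induction n with
  | zero =>
    simp only [Finset.range_zero, Finset.prod_empty, one_mul]
    exact tsum_congr fun k => by rw [FC_congr (hseq_zero a f) (k : ℤ)]
  | succ n ih =>
    rw [ih, phi_step ha hf hnegs n hw, Finset.prod_range_succ]
    ring


lemma em_zero (θ : ℝ) : em 0 θ = 1 := by
  unfold em; simp

lemma FC_zero_eq (v : ℝ → ℂ) : FC v 0 = ∫ θ in Set.Ioc (0:ℝ) (2*π), v θ := by
  unfold FC
  exact integral_congr_ae (ae_of_all _ fun θ => by simp only []; rw [em_zero, mul_one])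

end

end MTaux

open MTaux

/-- The Malmquist–Takenaka system on the torus associated with a sequence `(a_j)` of points of
the open unit disk with `∑ (1 − |a_j|²) = ∞` is an orthonormal basis of `H²` of the torus:
if `f` is a (2π-periodic) square-integrable function on the circle whose Fourier coefficients
of negative order vanish and which is orthogonal to every `φ_n`, then `f = 0` a.e. -/
theorem malmquist_takenaka_torus_basis (a : ℕ → ℂ) (ha : ∀ j, ‖a j‖ < 1)
    (hdiv : Tendsto (fun N => ∑ j ∈ Finset.range N, (1 - ‖a j‖ ^ 2)) atTop atTop)
    (B : ℕ → ℂ → ℂ)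
    (hB : ∀ n z, B n z = ∏ j ∈ Finset.range n, (z - a j) / (1 - conj (a j) * z))
    (φ : ℕ → ℂ → ℂ)
    (hφ : ∀ n z, φ n z =
      B n z * (Real.sqrt (1 - ‖a n‖ ^ 2) : ℂ) / (1 - conj (a n) * z))
    (f : ℝ → ℂ) (hper : Function.Periodic f (2 * π))
    (hf2 : MemLp f 2 (volume.restrict (Set.Ioc 0 (2 * π))))
    (hneg : ∀ k : ℤ, k < 0 →
      ∫ θ : ℝ in (0 : ℝ)..(2 * π), f θ * Complex.exp (-(k : ℂ) * (θ : ℂ) * I) = 0)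
    (horth : ∀ n : ℕ,
      ∫ θ : ℝ in (0 : ℝ)..(2 * π), f θ * conj (φ n (Complex.exp ((θ : ℂ) * I))) = 0) :
    ∀ᵐ θ : ℝ, f θ = 0 := by
  have ha' : ∀ j, ‖a j‖ < 1 := ha
  haveI : IsFiniteMeasure (volume.restrict (Set.Ioc (0:ℝ) (2*π))) :=
    ⟨by rw [Measure.restrict_apply_univ]; exact measure_Ioc_lt_top⟩
  have hfint : Integrable f (volume.restrict (Set.Ioc (0:ℝ) (2*π))) :=
    hf2.integrable (by norm_num)
  set M : ℝ := ∫ θ in Set.Ioc (0:ℝ) (2*π), ‖f θ‖ with hM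
  -- negative Fourier coefficients vanish
  have hneg0 : ∀ m : ℤ, m < 0 → FC f m = 0 := by
    intro m hm
    have h1 := hneg m hm
    rw [intervalIntegral.integral_of_le Real.two_pi_pos.le] at h1
    exact h1
  -- the orthogonality conditions
  have hzero : ∀ n, ∑' k : ℕ, (a n) ^ k * FC (hseq a f n) (k : ℤ) = 0 := by
    intro n
    have h1 := horth n
    rw [intervalIntegral.integral_of_le Real.two_pi_pos.le] at h1
    have h4 : ∀ θ : ℝ, f θ * conj (φ n (Complex.exp ((θ:ℂ) * I)))
        = (Real.sqrt (1 - ‖a n‖ ^ 2) : ℂ)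
          * ((1 - a n * em 1 θ)⁻¹ * hseq a f n θ) := by
      intro θ
      have hecd : Complex.exp ((θ:ℂ) * I) = ec θ := rfl
      rw [hecd, hφ, hB]
      have hconjB : conj (∏ j ∈ Finset.range n, (ec θ - a j) / (1 - conj (a j) * ec θ))
          = ∏ j ∈ Finset.range n, qf (a j) θ := by
        rw [map_prod]
        exact Finset.prod_congr rfl fun j _ => conj_bfactor (ha' j) θ
      rw [map_div₀, map_mul, hconjB, Complex.conj_ofReal]
      have hden : conj (1 - conj (a n) * ec θ) = 1 - a n * em 1 θ := by
        rw [map_sub, map_one, map_mul, Complex.conj_conj, conj_ec]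
      rw [hden]
      unfold hseq
      rw [div_eq_mul_inv]
      ring
    rw [integral_congr_ae (ae_of_all _ h4)] at h1
    rw [integral_const_mul] at h1
    have hsq : (Real.sqrt (1 - ‖a n‖ ^ 2) : ℂ) ≠ 0 := by
      rw [ne_eq, Complex.ofReal_eq_zero]
      refine Real.sqrt_ne_zero'.mpr ?_
      have := ha' n
      nlinarith [norm_nonneg (a n)]
    have h5 : ∫ θ in Set.Ioc (0:ℝ) (2*π), (1 - a n * em 1 θ)⁻¹ * hseq a f n θ = 0 :=
      (mul_eq_zero.mp h1).resolve_left hsq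
    have h6 : FC (fun θ => (1 - a n * em 1 θ)⁻¹ * hseq a f n θ) 0 = 0 := by
      rw [FC_zero_eq]
      exact h5
    rw [FC_geom (a n) (ha' n) 1 (hseq a f n) (hseq_integrable ha' hfint n) 0] at h6
    rw [← h6]
    exact tsum_congr fun k => by rw [zero_add, one_mul]
  -- negative coefficients of all h_n vanish
  have hnegs : ∀ n, ∀ m : ℤ, m < 0 → FC (hseq a f n) m = 0 :=
    neg_coeff_vanish ha' hfint hneg0 hzero
  -- the holomorphic extension vanishes identically
  have hFw : ∀ w : ℂ, ‖w‖ < 1 → ∑' k : ℕ, FC f (k : ℤ) * w ^ k = 0 := by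
    intro w hw
    set S : ℂ := ∑' k : ℕ, FC f (k : ℤ) * w ^ k with hS
    have hbound : ∀ n : ℕ, ‖S‖
        ≤ Real.exp (-((1-‖w‖^2)/8 * ∑ j ∈ Finset.range n, (1 - ‖a j‖^2)))
          * (M * (1-‖w‖)⁻¹) := by
      intro n
      rw [hS, phi_prod ha' hfint hnegs n hw]
      rw [norm_mul, norm_prod]
      have h1 : ∏ j ∈ Finset.range n, ‖(w - a j) / (1 - conj (a j) * w)‖
          ≤ ∏ j ∈ Finset.range n, Real.exp (-((1 - ‖a j‖^2) * (1 - ‖w‖^2) / 8)) := by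
        refine Finset.prod_le_prod (fun j _ => norm_nonneg _) (fun j _ => ?_)
        exact blaschke_norm_le (ha' j) hw
      have h2 : ‖∑' k : ℕ, FC (hseq a f n) (k : ℤ) * w ^ k‖ ≤ M * (1-‖w‖)⁻¹ :=
        norm_tsum_pow_le (fun k => norm_FC_hseq_le ha' n (k : ℤ)) hw
      have h3 : ∏ j ∈ Finset.range n, Real.exp (-((1 - ‖a j‖^2) * (1 - ‖w‖^2) / 8))
          = Real.exp (-((1-‖w‖^2)/8 * ∑ j ∈ Finset.range n, (1 - ‖a j‖^2))) := by
        rw [← Real.exp_sum]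
        congr 1
        rw [Finset.mul_sum, ← Finset.sum_neg_distrib]
        exact Finset.sum_congr rfl fun j _ => by ring
      rw [← h3]
      exact mul_le_mul h1 h2 (norm_nonneg _) (Finset.prod_nonneg fun j _ => (Real.exp_pos _).le)
    have hlim : Tendsto (fun n : ℕ =>
        Real.exp (-((1-‖w‖^2)/8 * ∑ j ∈ Finset.range n, (1 - ‖a j‖^2)))
          * (M * (1-‖w‖)⁻¹)) atTop (nhds 0) := by
      have hc : (0:ℝ) < (1-‖w‖^2)/8 := by nlinarith [norm_nonneg w]
      have hdiv' : Tendsto (fun N => ∑ j ∈ Finset.range N, (1 - ‖a j‖ ^ 2)) atTop atTop := hdiv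
      have h1 : Tendsto (fun n : ℕ => (1-‖w‖^2)/8 * ∑ j ∈ Finset.range n, (1 - ‖a j‖^2))
          atTop atTop := hdiv'.const_mul_atTop hc
      have h2 : Tendsto (fun n : ℕ => -((1-‖w‖^2)/8 * ∑ j ∈ Finset.range n, (1 - ‖a j‖^2)))
          atTop atBot := tendsto_neg_atTop_atBot.comp h1
      have h3 : Tendsto (fun n : ℕ =>
          Real.exp (-((1-‖w‖^2)/8 * ∑ j ∈ Finset.range n, (1 - ‖a j‖^2)))) atTop (nhds 0) :=
        Real.tendsto_exp_atBot.comp h2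
      have := h3.mul_const (M * (1-‖w‖)⁻¹)
      rwa [zero_mul] at this
    have : ‖S‖ ≤ 0 := ge_of_tendsto hlim (Filter.Eventually.of_forall hbound)
    exact norm_le_zero_iff.mp this
  -- extract the coefficients
  have hpos : ∀ k : ℕ, FC f (k : ℤ) = 0 :=
    zero_of_tsum_pow M (fun k : ℕ => FC f (k : ℤ)) (fun k => norm_FC_le f (k : ℤ)) hFw
  have hall : ∀ m : ℤ, FC f m = 0 := by
    intro m
    rcases lt_or_ge m 0 with hm | hm
    · exact hneg0 m hm
    · obtain ⟨k, rfl⟩ := Int.eq_ofNat_of_zero_le hm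
      exact hpos k
  exact ae_zero_of_ae_zero_Ioc f hper (ae_zero_Ioc_of_coeffs f hf2 hall)
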